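/- Let d ≥ 1, η > 0, L ≥ 0, and take the scaling a = d. Let Q ⊆ ℝ^{d+1} be nonempty and closed, z ∈ ℝ^{d+1} with last coordinate z_{d+1} = s − dη for some s ∈ ℝ, let w* ∈ Q be the metric projection of z onto Q, and let w̃ ∈ ℝ^{d+1} satisfy ‖w̃ − w*‖ ≤ (1 + L/d)·√(2η/(d+1)). Define δ₀ = (1 + L/d)·√(2η/(d+1)), P₁(w) = (‖w − w̃‖² + ‖w̃ − z‖²)/(2η) − (√2·(L+d)/(d·√(η(d+1))))·(‖w − w̃‖ + ‖w̃ − z‖) − 6(L+d)²/(d²(d+1)) + d s − d²η/2, and P₂(w) = (1/(2η))·[(‖w − w̃‖ − δ₀)² + (‖z − w*‖ − 2δ₀)² − 32·(1 + L/d)²·η/(d+1)] − d²η/2 + d s. Then P₂(w) ≤ P₁(w) for every w ∈ ℝ^{d+1}. -/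

import Mathlib

/-- The Euclidean norm of a point of `ℝ^d × ℝ ≅ ℝ^{d+1}`. -/
noncomputable def enorm2 {d : ℕ} (p : EuclideanSpace ℝ (Fin d) × ℝ) : ℝ :=
  Real.sqrt (‖p.1‖ ^ 2 + p.2 ^ 2)

/-- With the scaling `a = d`: if `w*` is the projection of `z` (with last coordinate `s - dη`)
onto the nonempty closed set `Q ⊆ ℝ^{d+1}` and `‖w̃ - w*‖ ≤ δ₀ := (1 + L/d)√(2η/(d+1))`, then
the auxiliary Gaussian-like potential `P₂` lower-bounds the proposal potential `P₁`
everywhere. -/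
lemma enorm2_nonneg {d : ℕ} (p : EuclideanSpace ℝ (Fin d) × ℝ) : 0 ≤ enorm2 p :=
  Real.sqrt_nonneg _

lemma sqrt_tri (a b a' b' : ℝ) :
    Real.sqrt ((a+a')^2 + (b+b')^2) ≤ Real.sqrt (a^2+b^2) + Real.sqrt (a'^2+b'^2) := by
  have := norm_add_le (⟨a,b⟩ : ℂ) ⟨a',b'⟩
  simpa [Complex.norm_def, Complex.normSq_apply, sq] using this

lemma enorm2_add_le {d : ℕ} (p q : EuclideanSpace ℝ (Fin d) × ℝ) :
    enorm2 (p + q) ≤ enorm2 p + enorm2 q := by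
  unfold enorm2
  have h1 : Real.sqrt (‖(p+q).1‖^2 + (p+q).2^2)
      ≤ Real.sqrt ((‖p.1‖+‖q.1‖)^2 + (p.2+q.2)^2) := by
    apply Real.sqrt_le_sqrt
    have := norm_add_le p.1 q.1
    have h2 : ‖(p+q).1‖^2 ≤ (‖p.1‖+‖q.1‖)^2 := by
      apply pow_le_pow_left₀ (norm_nonneg _) (by simpa using this)
    simpa using h2
  exact h1.trans (sqrt_tri _ _ _ _)

lemma enorm2_sub_rev {d : ℕ} (p q : EuclideanSpace ℝ (Fin d) × ℝ) :
    enorm2 (p - q) = enorm2 (q - p) := by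
  unfold enorm2
  rw [show (p-q).1 = p.1 - q.1 from rfl, show (q-p).1 = q.1 - p.1 from rfl,
    show (p-q).2 = p.2 - q.2 from rfl, show (q-p).2 = q.2 - p.2 from rfl, norm_sub_rev]
  ring_nf

set_option maxHeartbeats 1000000 in
theorem stmt_13 {d : ℕ} (hd : 1 ≤ d) (η L s : ℝ) (hη : 0 < η) (hL : 0 ≤ L)
    (Q : Set (EuclideanSpace ℝ (Fin d) × ℝ)) (hQne : Q.Nonempty) (hQcl : IsClosed Q)
    (z : EuclideanSpace ℝ (Fin d) × ℝ) (hz : z.2 = s - d * η)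
    (ws : EuclideanSpace ℝ (Fin d) × ℝ) (hws : ws ∈ Q)
    (hproj : ∀ w ∈ Q, enorm2 (ws - z) ≤ enorm2 (w - z))
    (wt : EuclideanSpace ℝ (Fin d) × ℝ)
    (hwt : enorm2 (wt - ws) ≤ (1 + L / d) * Real.sqrt (2 * η / (d + 1))) :
    ∀ w : EuclideanSpace ℝ (Fin d) × ℝ,
      (1 / (2 * η)) *
          ((enorm2 (w - wt) - (1 + L / d) * Real.sqrt (2 * η / (d + 1))) ^ 2
            + (enorm2 (z - ws) - 2 * ((1 + L / d) * Real.sqrt (2 * η / (d + 1)))) ^ 2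
            - 32 * (1 + L / d) ^ 2 * η / (d + 1))
          - d ^ 2 * η / 2 + d * s
        ≤ (enorm2 (w - wt) ^ 2 + enorm2 (wt - z) ^ 2) / (2 * η)
          - (Real.sqrt 2 * (L + d) / (d * Real.sqrt (η * (d + 1))))
              * (enorm2 (w - wt) + enorm2 (wt - z))
          - 6 * (L + d) ^ 2 / (d ^ 2 * (d + 1))
          + d * s - d ^ 2 * η / 2 := by
  intro w
  set dd : ℝ := (d : ℝ) with hdd
  have hdd1 : (1:ℝ) ≤ dd := by rw [hdd]; exact_mod_cast hd
  have hdd0 : 0 < dd := by linarith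
  have hdd10 : 0 < dd + 1 := by linarith
  have hηd1 : 0 < η * (dd + 1) := mul_pos hη hdd10
  have hsq : 0 < Real.sqrt (η * (dd + 1)) := Real.sqrt_pos.mpr hηd1
  set r : ℝ := Real.sqrt (2 * η / (dd + 1)) with hr
  have hr0 : 0 ≤ r := Real.sqrt_nonneg _
  have hr2 : r ^ 2 = 2 * η / (dd + 1) :=
    Real.sq_sqrt (by positivity)
  set D : ℝ := (1 + L / dd) * r with hDdef
  have hX0 : (0:ℝ) ≤ 1 + L / dd := by positivity
  have hD0 : 0 ≤ D := mul_nonneg hX0 hr0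
  have hD2 : D ^ 2 = (1 + L / dd) ^ 2 * (2 * η / (dd + 1)) := by
    rw [hDdef, mul_pow, hr2]
  set c : ℝ := Real.sqrt 2 * (L + dd) / (dd * Real.sqrt (η * (dd + 1))) with hcdef
  have hc0 : 0 ≤ c := by
    apply div_nonneg (mul_nonneg (Real.sqrt_nonneg _) (by linarith)) (by positivity)
  have hcη : c * η = D := by
    have h1 : 0 ≤ c * η := mul_nonneg hc0 hη.le
    have h2 : (c * η) ^ 2 = D ^ 2 := by
      have e1 : (Real.sqrt 2) ^ 2 = 2 := Real.sq_sqrt (by norm_num)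
      have e2 : (Real.sqrt (η * (dd + 1))) ^ 2 = η * (dd + 1) := Real.sq_sqrt hηd1.le
      have e3 : (c * η) ^ 2 = 2 * (L + dd) ^ 2 * η ^ 2 / (dd ^ 2 * (η * (dd + 1))) := by
        rw [hcdef, div_mul_eq_mul_div, div_pow, mul_pow, mul_pow, mul_pow, e1, e2]
      rw [e3, hD2]
      field_simp
      ring
    calc c * η = Real.sqrt ((c * η) ^ 2) := (Real.sqrt_sq h1).symm
      _ = Real.sqrt (D ^ 2) := by rw [h2]
      _ = D := Real.sqrt_sq hD0
  have hc' : c = D / η := (eq_div_iff hη.ne').mpr hcη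
  set A : ℝ := enorm2 (w - wt) with hA
  set B : ℝ := enorm2 (wt - z) with hB
  set C : ℝ := enorm2 (z - ws) with hC
  have hA0 : 0 ≤ A := enorm2_nonneg _
  have hB0 : 0 ≤ B := enorm2_nonneg _
  have hC0 : 0 ≤ C := enorm2_nonneg _
  have hCB : C ≤ B + D := by
    have e : z - ws = (z - wt) + (wt - ws) := by abel
    have h1 : C ≤ enorm2 (z - wt) + enorm2 (wt - ws) := by
      rw [hC, e]; exact enorm2_add_le _ _
    have h2 : enorm2 (z - wt) = B := by rw [hB, enorm2_sub_rev]
    linarith [hwt, h1, h2.le, h2.ge]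
  have h32 : 32 * (1 + L / dd) ^ 2 * η / (dd + 1) = 16 * D ^ 2 := by
    rw [hD2]; field_simp; ring
  have h6 : 6 * (L + dd) ^ 2 / (dd ^ 2 * (dd + 1)) = 3 * D ^ 2 / η := by
    rw [hD2]; field_simp; ring
  rw [h32, h6, hc']
  have key : (C - 2 * D) ^ 2 ≤ (B - D) ^ 2 + 4 * D ^ 2 := by
    rcases le_or_gt C (2 * D) with h | h
    · nlinarith
    · nlinarith
  have main : (A - D) ^ 2 + (C - 2 * D) ^ 2 - 16 * D ^ 2
      ≤ A ^ 2 + B ^ 2 - 2 * D * (A + B) - 6 * D ^ 2 := by nlinarith [key]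
  have e1 : (A ^ 2 + B ^ 2) / (2 * η) - D / η * (A + B) - 3 * D ^ 2 / η + dd * s
        - dd ^ 2 * η / 2
      = (1 / (2 * η)) * (A ^ 2 + B ^ 2 - 2 * D * (A + B) - 6 * D ^ 2)
        - dd ^ 2 * η / 2 + dd * s := by
    field_simp; ring
  rw [e1]
  have hmul := mul_le_mul_of_nonneg_left main (by positivity : (0:ℝ) ≤ 1 / (2 * η))
  linarith
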